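/- Let $A$ be a totally unimodular $m \times d$ integer matrix, let $b \in \mathbb{Z}^m$, let $n$ be a positive integer, and let $c = (c^1, \dots, c^n)$ with each $c^k \in \mathbb{Z}^d$ be nondecreasing, i.e. $c^k_i \le c^{k+1}_i$ for all $1 \le k < n$ and $1 \le i \le d$. If the set $F := \{x = (x^1, \dots, x^n) : x^k \in \{0,1\}^d,\, A x^k = b \text{ for } k = 1, \dots, n\}$ is nonempty, then the minimum of $c\bar{x}$ over $x \in F$ equals the minimum of $cy$ over all $y = (y^1, \dots, y^n)$ with each $y^k \in \{0,1\}^d$ and $A \sum_{k=1}^n y^k = n\cdot b$. -/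

import Mathlib

/-- The compression `x̄` of `x = (x¹,…,xⁿ)`, `xᵏ ∈ {0,1}^d`: here `k : Fin n` encodes the
index `k+1 ∈ {1,…,n}`, and `x̄ᵏᵢ = 1` if `k+1 ≤ ∑ l, xˡᵢ` and `x̄ᵏᵢ = 0` otherwise. -/
def compression (n d : ℕ) (x : Fin n → Fin d → ℤ) : Fin n → Fin d → ℤ :=
  fun k i => if ((k : ℕ) + 1 : ℤ) ≤ ∑ l, x l i then 1 else 0

/-- The pairing `cx := ∑ₖ ∑ᵢ cᵏᵢ xᵏᵢ`. -/
def pairing (n d : ℕ) (c x : Fin n → Fin d → ℤ) : ℤ :=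
  ∑ k, ∑ i, c k i * x k i

open Matrix

lemma card_filter_val_lt (n t : ℕ) (ht : t ≤ n) :
    (Finset.univ.filter (fun k : Fin n => (k : ℕ) < t)).card = t := by
  have : (Finset.univ.filter (fun k : Fin n => (k : ℕ) < t))
      = Finset.image (Fin.castLE ht) Finset.univ := by
    ext k
    simp only [Finset.mem_filter, Finset.mem_univ, true_and, Finset.mem_image]
    constructor
    · intro hk; exact ⟨⟨k, hk⟩, rfl⟩
    · rintro ⟨i, rfl⟩; exact i.2
  rw [this, Finset.card_image_of_injective _ (Fin.castLE_injective ht)]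
  simp

lemma sum_le_card_of_le_one {n : ℕ} (f : Fin n → ℤ) (hf : ∀ k, f k = 0 ∨ f k = 1) :
    0 ≤ ∑ k, f k ∧ ∑ k, f k ≤ n := by
  constructor
  · exact Finset.sum_nonneg fun k _ => by rcases hf k with h | h <;> simp [h]
  · calc ∑ k, f k ≤ ∑ _k : Fin n, (1 : ℤ) :=
        Finset.sum_le_sum fun k _ => by rcases hf k with h | h <;> simp [h]
    _ = n := by simp

lemma sum_compression (n d : ℕ) (x : Fin n → Fin d → ℤ)
    (hx : ∀ k j, x k j = 0 ∨ x k j = 1) (i : Fin d) :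
    ∑ k, compression n d x k i = ∑ k, x k i := by
  set s : ℤ := ∑ l, x l i with hs
  obtain ⟨hs0, hsn⟩ := sum_le_card_of_le_one (fun l => x l i) (fun l => hx l i)
  have hts : (s.toNat : ℤ) = s := Int.toNat_of_nonneg hs0
  have htn : s.toNat ≤ n := by omega
  unfold compression
  rw [← hs]
  calc ∑ k : Fin n, (if ((k : ℕ) + 1 : ℤ) ≤ s then (1:ℤ) else 0)
      = ∑ k : Fin n, (if (k : ℕ) < s.toNat then (1:ℤ) else 0) := by
        refine Finset.sum_congr rfl fun k _ => ?_
        congr 1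
        simp only [eq_iff_iff]
        omega
    _ = ((Finset.univ.filter (fun k : Fin n => (k : ℕ) < s.toNat)).card : ℤ) := by
        rw [Finset.sum_ite, Finset.sum_const, Finset.sum_const]
        simp
    _ = s := by rw [card_filter_val_lt n s.toNat htn, hts]

lemma sum_range_le_sum_subset (c : ℕ → ℤ) :
    ∀ n : ℕ, (∀ a b : ℕ, a ≤ b → b < n → c a ≤ c b) →
    ∀ S : Finset ℕ, S ⊆ Finset.range n →
    ∑ k ∈ Finset.range S.card, c k ≤ ∑ k ∈ S, c k := by
  intro n
  induction n with
  | zero =>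
    intro _ S hS
    simp [Finset.subset_empty.mp (by simpa using hS)]
  | succ n ih =>
    intro hc S hS
    by_cases hn : n ∈ S
    · have hS' : S.erase n ⊆ Finset.range n := by
        intro a ha
        have h1 := Finset.mem_of_mem_erase ha
        have h2 := Finset.ne_of_mem_erase ha
        have := Finset.mem_range.mp (hS h1)
        exact Finset.mem_range.mpr (by omega)
      have hcard : S.card = (S.erase n).card + 1 := by
        rw [Finset.card_erase_of_mem hn]
        have : 0 < S.card := Finset.card_pos.mpr ⟨n, hn⟩
        omega
      have hcardle : (S.erase n).card ≤ n := by
        have := Finset.card_le_card hS'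
        simpa using this
      have key := ih (fun a b hab hb => hc a b hab (by omega)) (S.erase n) hS'
      calc ∑ k ∈ Finset.range S.card, c k
          = ∑ k ∈ Finset.range (S.erase n).card, c k + c (S.erase n).card := by
            rw [hcard, Finset.sum_range_succ]
        _ ≤ ∑ k ∈ S.erase n, c k + c n := by
            have := hc (S.erase n).card n hcardle (Nat.lt_succ_self n)
            exact add_le_add key this
        _ = ∑ k ∈ S, c k := by
            rw [add_comm, Finset.add_sum_erase _ _ hn]
    · exact ih (fun a b hab hb => hc a b hab (by omega)) S
        (fun a ha => by
          have := Finset.mem_range.mp (hS ha)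
          have : a ≠ n := fun h => hn (h ▸ ha)
          exact Finset.mem_range.mpr (by omega))

lemma pairing_compression_le (n d : ℕ) (c y : Fin n → Fin d → ℤ)
    (hc : ∀ (k : ℕ) (h : k + 1 < n) (i : Fin d),
      c ⟨k, Nat.lt_of_succ_lt h⟩ i ≤ c ⟨k + 1, h⟩ i)
    (hy : ∀ k j, y k j = 0 ∨ y k j = 1) :
    pairing n d c (compression n d y) ≤ pairing n d c y := by
  unfold pairing
  rw [Finset.sum_comm]
  conv_rhs => rw [Finset.sum_comm]
  refine Finset.sum_le_sum fun i _ => ?_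
  -- per-coordinate
  set cc : ℕ → ℤ := fun k => if h : k < n then c ⟨k, h⟩ i else 0 with hcc
  have hmono : ∀ a b : ℕ, a ≤ b → b < n → cc a ≤ cc b := by
    intro a b hab hb
    induction b, hab using Nat.le_induction with
    | base => exact le_rfl
    | succ b hab ih =>
      have hb' : b < n := by omega
      have := hc b hb i
      have h1 : cc b = c ⟨b, hb'⟩ i := by simp [hcc, hb']
      have h2 : cc (b+1) = c ⟨b+1, hb⟩ i := by simp [hcc, hb]
      calc cc a ≤ cc b := ih hb'
        _ ≤ cc (b+1) := by rw [h1, h2]; exact this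
  set s : ℤ := ∑ l, y l i with hs
  obtain ⟨hs0, hsn⟩ := sum_le_card_of_le_one (fun l => y l i) (fun l => hy l i)
  rw [← hs] at hs0 hsn
  set t : ℕ := s.toNat with ht
  have hts : (t : ℤ) = s := Int.toNat_of_nonneg hs0
  have htn : t ≤ n := by omega
  set Sones : Finset (Fin n) := Finset.univ.filter (fun k => y k i = 1) with hSones
  have hcardones : (Sones.card : ℤ) = s := by
    rw [hs]
    rw [Finset.card_eq_sum_ones Sones]
    push_cast
    rw [Finset.sum_filter]
    refine Finset.sum_congr rfl fun k _ => ?_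
    rcases hy k i with h | h <;> simp [h]
  -- RHS rewrite
  have hrhs : ∑ k, c k i * y k i = ∑ j ∈ Sones.image Fin.val, cc j := by
    rw [Finset.sum_image (fun a _ b _ h => Fin.val_injective h)]
    rw [hSones, Finset.sum_filter]
    refine Finset.sum_congr rfl fun k _ => ?_
    have : cc (k : ℕ) = c k i := by simp [hcc, k.2]
    rcases hy k i with h | h <;> simp [h, this]
  -- LHS rewrite
  have hlhs : ∑ k, c k i * compression n d y k i = ∑ j ∈ Finset.range t, cc j := by
    unfold compression
    rw [← hs]
    have : ∀ k : Fin n, c k i * (if ((k : ℕ) + 1 : ℤ) ≤ s then (1:ℤ) else 0)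
        = if (k : ℕ) ∈ Finset.range t then cc (k : ℕ) else 0 := by
      intro k
      have hkn : cc (k : ℕ) = c k i := by simp [hcc, k.2]
      by_cases h : ((k : ℕ) + 1 : ℤ) ≤ s
      · have : (k : ℕ) < t := by omega
        simp [h, this, hkn]
      · have : ¬ (k : ℕ) < t := by omega
        simp [h, this]
    rw [Finset.sum_congr rfl fun k _ => this k]
    rw [← Finset.sum_filter]
    have himg : Finset.image Fin.val
        (Finset.univ.filter (fun a : Fin n => (a : ℕ) ∈ Finset.range t))
        = Finset.range t := by
      ext j
      simp only [Finset.mem_image, Finset.mem_filter, Finset.mem_univ, true_and,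
        Finset.mem_range]
      constructor
      · rintro ⟨k, hk, rfl⟩; exact hk
      · intro hj; exact ⟨⟨j, by omega⟩, hj, rfl⟩
    calc ∑ a ∈ Finset.univ.filter (fun a : Fin n => (a : ℕ) ∈ Finset.range t), cc (a : ℕ)
        = ∑ j ∈ Finset.image Fin.val
            (Finset.univ.filter fun a : Fin n => (a : ℕ) ∈ Finset.range t), cc j :=
          (Finset.sum_image (fun a _ b _ h => Fin.val_injective h)).symm
      _ = ∑ j ∈ Finset.range t, cc j := by rw [himg]
  rw [hlhs, hrhs]
  have hcard : (Sones.image Fin.val).card = t := by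
    rw [Finset.card_image_of_injective _ Fin.val_injective]
    omega
  have hsub : Sones.image Fin.val ⊆ Finset.range n := by
    intro j hj
    simp only [Finset.mem_image] at hj
    obtain ⟨k, _, rfl⟩ := hj
    exact Finset.mem_range.mpr k.2
  have := sum_range_le_sum_subset cc n hmono (Sones.image Fin.val) hsub
  rwa [hcard] at this

lemma ratCast_det {k : ℕ} (M : Matrix (Fin k) (Fin k) ℤ) :
    (M.map ((↑) : ℤ → ℚ)).det = ((M.det : ℤ) : ℚ) :=
  (RingHom.map_det (Int.castRingHom ℚ) M).symm

lemma tu_det_cases {m d : ℕ} {A : Matrix (Fin m) (Fin d) ℤ} (hA : A.IsTotallyUnimodular)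
    {k : ℕ} (r : Fin k → Fin m) (g : Fin k → Fin d) :
    ((A.map ((↑) : ℤ → ℚ)).submatrix r g).det = 0 ∨
    ((A.map ((↑) : ℤ → ℚ)).submatrix r g).det = 1 ∨
    ((A.map ((↑) : ℤ → ℚ)).submatrix r g).det = -1 := by
  obtain ⟨s, hs⟩ := (A.isTotallyUnimodular_iff.mp hA) k r g
  have heq : (A.map ((↑) : ℤ → ℚ)).submatrix r g = (A.submatrix r g).map ((↑) : ℤ → ℚ) := rfl
  rw [heq, ratCast_det, ← hs]
  rcases s with _ | _ | _ <;> simp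

lemma image_univ_eq_of_inj_card {d k : ℕ} (T : Finset (Fin d)) (e : Fin k → Fin d)
    (hmem : ∀ i, e i ∈ T) (hinj : Function.Injective e) (hcard : T.card = k) :
    Finset.image e Finset.univ = T :=
  Finset.eq_of_subset_of_card_le
    (fun j hj => by obtain ⟨i, _, rfl⟩ := Finset.mem_image.mp hj; exact hmem i)
    (by rw [Finset.card_image_of_injective _ hinj, Finset.card_univ, Fintype.card_fin, hcard])

lemma sum_fin_eq_sum_finset {d k : ℕ} (T : Finset (Fin d)) (e : Fin k → Fin d)
    (hmem : ∀ i, e i ∈ T) (hinj : Function.Injective e) (hcard : T.card = k)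
    (f : Fin d → ℚ) : ∑ i, f (e i) = ∑ j ∈ T, f j := by
  rw [← image_univ_eq_of_inj_card T e hmem hinj hcard,
    Finset.sum_image (fun a _ b _ h => hinj h)]

lemma mulVec_eq_sum_support {m d : ℕ} (M : Matrix (Fin m) (Fin d) ℚ) (T : Finset (Fin d))
    (g : Fin d → ℚ) (hg : ∀ j ∉ T, g j = 0) (i : Fin m) :
    (M *ᵥ g) i = ∑ j ∈ T, M i j * g j := by
  simp only [Matrix.mulVec, dotProduct]
  exact (Finset.sum_subset (Finset.subset_univ T)
    (fun j _ hj => by rw [hg j hj, mul_zero]) : ∑ j ∈ T, M i j * g j = _).symm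

lemma cramer_solution {k : ℕ} (C : Matrix (Fin k) (Fin k) ℚ) (hC : C.det ≠ 0)
    (x t : Fin k → ℚ) (hx : C *ᵥ x = t) (i : Fin k) :
    C.det * x i = (C.updateCol i t).det := by
  have hunit : IsUnit C.det := isUnit_iff_ne_zero.mpr hC
  have h1 : C *ᵥ (Matrix.cramer C t) = C.det • t := Matrix.mulVec_cramer C t
  have h2 : C *ᵥ (C.det • x) = C.det • t := by
    rw [Matrix.mulVec_smul, hx]
  have h3 : Matrix.cramer C t = C.det • x := by
    have h5 := congrArg (fun v => C⁻¹ *ᵥ v) (h1.trans h2.symm)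
    simp only [Matrix.mulVec_mulVec] at h5
    rw [Matrix.nonsing_inv_mul C hunit] at h5
    simpa using h5
  have := congrFun h3.symm i
  simpa [Matrix.cramer_apply, Pi.smul_apply, smul_eq_mul] using this

lemma exists_rows_det_ne_zero {m : ℕ} :
    ∀ k : ℕ, ∀ B : Matrix (Fin m) (Fin k) ℚ,
    (∀ x : Fin k → ℚ, B *ᵥ x = 0 → x = 0) →
    ∃ r : Fin k → Fin m, (B.submatrix r id).det ≠ 0 := by
  intro k
  induction k with
  | zero =>
    intro B _
    exact ⟨Fin.elim0, by simp [Matrix.det_fin_zero]⟩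
  | succ k ih =>
    intro B hB
    set B' : Matrix (Fin m) (Fin k) ℚ := B.submatrix id Fin.castSucc with hB'def
    have hB'ker : ∀ x : Fin k → ℚ, B' *ᵥ x = 0 → x = 0 := by
      intro x hx
      have hxx : B *ᵥ (Fin.snoc x 0) = 0 := by
        funext i
        have h0 := congrFun hx i
        simp only [Matrix.mulVec, dotProduct] at h0 ⊢
        rw [Fin.sum_univ_castSucc]
        simp only [Fin.snoc_castSucc, Fin.snoc_last, mul_zero, add_zero]
        simpa [hB'def, Matrix.submatrix_apply] using h0
      have hz := hB _ hxx
      funext j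
      have := congrFun hz (Fin.castSucc j)
      simpa using this
    obtain ⟨r', hr'⟩ := ih B' hB'ker
    by_contra hcon
    push_neg at hcon
    set g : Fin (k+1) → ℚ :=
      fun j => (-1 : ℚ) ^ ((Fin.last k : ℕ) + (j : ℕ)) * (B.submatrix r' j.succAbove).det
      with hgdef
    have hkey : ∀ i : Fin m, (B *ᵥ g) i = (B.submatrix (Fin.snoc r' i) id).det := by
      intro i
      rw [Matrix.det_succ_row _ (Fin.last k)]
      simp only [Matrix.mulVec, dotProduct]
      refine Finset.sum_congr rfl fun j _ => ?_
      have hentry : (B.submatrix (Fin.snoc r' i) id) (Fin.last k) j = B i j := by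
        simp [Matrix.submatrix_apply]
      have hminor : (B.submatrix (Fin.snoc r' i) id).submatrix (Fin.last k).succAbove
          j.succAbove = B.submatrix r' j.succAbove := by
        ext a b
        simp [Matrix.submatrix_apply, Fin.succAbove_last, Fin.snoc_castSucc]
      rw [hentry, hminor, hgdef]
      ring
    have hg0 : g = 0 := by
      apply hB
      funext i
      rw [hkey i]
      exact hcon _
    have : g (Fin.last k) ≠ 0 := by
      rw [hgdef]
      simp only
      apply mul_ne_zero
      · positivity
      · have : (Fin.last k).succAbove = Fin.castSucc := Fin.succAbove_last
        rw [this]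
        have : B.submatrix r' Fin.castSucc = B'.submatrix r' id := by
          ext a b; simp [hB'def, Matrix.submatrix_apply]
        rw [this]
        exact hr'
    rw [hg0] at this
    exact this rfl

lemma exists_sign_kernel {m d : ℕ} (A : Matrix (Fin m) (Fin d) ℤ)
    (hA : A.IsTotallyUnimodular) (S : Finset (Fin d)) (g0 : Fin d → ℚ)
    (hker0 : (A.map ((↑) : ℤ → ℚ)) *ᵥ g0 = 0)
    (hsupp0 : ∀ j ∉ S, g0 j = 0) (hne0 : g0 ≠ 0) :
    ∃ g : Fin d → ℚ, (A.map ((↑) : ℤ → ℚ)) *ᵥ g = 0 ∧ (∀ j ∉ S, g j = 0) ∧ g ≠ 0 ∧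
      ∀ j, g j = 0 ∨ g j = 1 ∨ g j = -1 := by
  classical
  set Aq := A.map ((↑) : ℤ → ℚ) with hAq
  set P : ℕ → Prop := fun cN => ∃ g : Fin d → ℚ, Aq *ᵥ g = 0 ∧ (∀ j ∉ S, g j = 0) ∧ g ≠ 0 ∧
      (Finset.univ.filter (fun j => g j ≠ 0)).card = cN with hP
  have hPex : ∃ cN, P cN := ⟨_, g0, hker0, hsupp0, hne0, rfl⟩
  obtain ⟨g1, hker1, hsupp1, hne1, hcard1⟩ := Nat.find_spec hPex
  set T : Finset (Fin d) := Finset.univ.filter (fun j => g1 j ≠ 0) with hT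
  have hsuppT : ∀ j ∉ T, g1 j = 0 := by
    intro j hj
    by_contra h
    exact hj (Finset.mem_filter.mpr ⟨Finset.mem_univ _, h⟩)
  have hTS : ∀ j ∈ T, j ∈ S := by
    intro j hj
    by_contra h
    exact (Finset.mem_filter.mp hj).2 (hsupp1 j h)
  have hTne : T.Nonempty := by
    obtain ⟨j, hj⟩ := Function.ne_iff.mp hne1
    exact ⟨j, Finset.mem_filter.mpr ⟨Finset.mem_univ _, by simpa using hj⟩⟩
  obtain ⟨t₀, ht₀⟩ := hTne
  have hg1t₀ : g1 t₀ ≠ 0 := (Finset.mem_filter.mp ht₀).2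
  set g2 : Fin d → ℚ := (g1 t₀)⁻¹ • g1 with hg2
  have hker2 : Aq *ᵥ g2 = 0 := by rw [hg2, Matrix.mulVec_smul, hker1, smul_zero]
  have hg2t₀ : g2 t₀ = 1 := by
    simp only [hg2, Pi.smul_apply, smul_eq_mul]
    exact inv_mul_cancel₀ hg1t₀
  have hsuppg2 : ∀ j, g2 j = 0 ↔ g1 j = 0 := by
    intro j
    simp only [hg2, Pi.smul_apply, smul_eq_mul, mul_eq_zero, inv_eq_zero]
    exact ⟨fun h => h.elim (fun h' => absurd h' hg1t₀) id, fun h => Or.inr h⟩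
  have hsupp2T : ∀ j ∉ T, g2 j = 0 := fun j hj => (hsuppg2 j).mpr (hsuppT j hj)
  set T' : Finset (Fin d) := T.erase t₀ with hT'
  set kc : ℕ := T'.card with hkc
  set e : Fin kc → Fin d := fun i => (T'.equivFin.symm i : Fin d) with he
  have hmem : ∀ i, e i ∈ T' := fun i => (T'.equivFin.symm i).2
  have hinj : Function.Injective e := by
    intro a b h
    have : T'.equivFin.symm a = T'.equivFin.symm b := Subtype.ext h
    exact T'.equivFin.symm.injective this
  have hcardT' : T'.card = kc := rfl
  have himg := image_univ_eq_of_inj_card T' e hmem hinj hcardT'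
  have hesurj : ∀ j ∈ T', ∃ i, e i = j := by
    intro j hj
    rw [← himg] at hj
    obtain ⟨i, _, rfl⟩ := Finset.mem_image.mp hj
    exact ⟨i, rfl⟩
  -- columns independence of B
  set B : Matrix (Fin m) (Fin kc) ℚ := Aq.submatrix id e with hB
  have hBker : ∀ x : Fin kc → ℚ, B *ᵥ x = 0 → x = 0 := by
    intro x hx
    set gg : Fin d → ℚ := fun j => if h : j ∈ T' then x (T'.equivFin ⟨j, h⟩) else 0 with hgg
    have hggsupp : ∀ j ∉ T', gg j = 0 := fun j hj => dif_neg hj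
    have hggval : ∀ i, gg (e i) = x i := by
      intro i
      have h1 : e i ∈ T' := hmem i
      simp only [hgg, dif_pos h1]
      congr 1
      have h2 : (⟨e i, h1⟩ : {y // y ∈ T'}) = T'.equivFin.symm i := Subtype.ext rfl
      rw [h2, Equiv.apply_symm_apply]
    have hggker : Aq *ᵥ gg = 0 := by
      funext i
      rw [mulVec_eq_sum_support Aq T' gg hggsupp i]
      rw [← sum_fin_eq_sum_finset T' e hmem hinj hcardT' (fun j => Aq i j * gg j)]
      have hxi := congrFun hx i
      simp only [Matrix.mulVec, dotProduct, hB, Matrix.submatrix_apply, id] at hxi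
      rw [← hxi]
      refine Finset.sum_congr rfl fun i' _ => ?_
      rw [hggval i']
    -- gg must be zero by minimality
    by_cases hggne : gg = 0
    · funext i
      have := congrFun hggne (e i)
      rw [hggval i] at this
      exact this
    · exfalso
      have hggS : ∀ j ∉ S, gg j = 0 := by
        intro j hj
        apply hggsupp
        intro hjT'
        exact hj (hTS j (Finset.mem_of_mem_erase hjT'))
      have hcardlt : (Finset.univ.filter (fun j => gg j ≠ 0)).card < Nat.find hPex := by
        calc (Finset.univ.filter (fun j => gg j ≠ 0)).card
            ≤ T'.card := by
              apply Finset.card_le_card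
              intro j hj
              by_contra h
              exact (Finset.mem_filter.mp hj).2 (hggsupp j h)
          _ < T.card := Finset.card_erase_lt_of_mem ht₀
          _ = Nat.find hPex := by rw [← hcard1]
      exact Nat.find_min hPex hcardlt ⟨gg, hggker, hggS, hggne, rfl⟩
  obtain ⟨r, hr⟩ := exists_rows_det_ne_zero kc B hBker
  set C : Matrix (Fin kc) (Fin kc) ℚ := B.submatrix r id with hC
  have hCsub : C = Aq.submatrix r e := rfl
  set x : Fin kc → ℚ := fun i => g2 (e i) with hx
  set t : Fin kc → ℚ := fun i' => -(Aq (r i') t₀) with htdef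
  have hCx : C *ᵥ x = t := by
    funext i'
    have h0 : (Aq *ᵥ g2) (r i') = 0 := by rw [hker2]; rfl
    rw [mulVec_eq_sum_support Aq T g2 hsupp2T (r i')] at h0
    rw [← Finset.add_sum_erase T (fun j => Aq (r i') j * g2 j) ht₀] at h0
    rw [← hT'] at h0
    rw [← sum_fin_eq_sum_finset T' e hmem hinj hcardT' (fun j => Aq (r i') j * g2 j)] at h0
    have hsum : (C *ᵥ x) i' = ∑ i'' : Fin kc, Aq (r i') (e i'') * g2 (e i'') := by
      simp only [Matrix.mulVec, dotProduct, hCsub, Matrix.submatrix_apply, hx]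
    rw [hg2t₀] at h0
    rw [hsum]
    show _ = -(Aq (r i') t₀)
    linarith [h0]
  have hdetC : C.det = 1 ∨ C.det = -1 := by
    rcases (hCsub ▸ tu_det_cases hA r e) with h | h | h
    · exact absurd h hr
    · exact Or.inl h
    · exact Or.inr h
  have hxval : ∀ i : Fin kc, x i = 0 ∨ x i = 1 ∨ x i = -1 := by
    intro i
    have hcr := cramer_solution C hr x t hCx i
    have hts : t = (-1 : ℚ) • (fun i' => Aq (r i') t₀) := by
      funext i'
      simp [htdef]
    have hupd : C.updateCol i (fun i' => Aq (r i') t₀)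
        = Aq.submatrix r (Function.update e i t₀) := by
      ext a bcol
      rw [Matrix.updateCol_apply]
      by_cases hbi : bcol = i
      · subst hbi
        simp [Matrix.submatrix_apply, Function.update_self]
      · simp [Matrix.submatrix_apply, Function.update_of_ne hbi, hbi, hCsub]
    rw [hts, Matrix.det_updateCol_smul, hupd] at hcr
    have hD := tu_det_cases hA r (Function.update e i t₀)
    rcases hdetC with h1 | h1 <;> rcases hD with h2 | h2 | h2 <;>
      rw [h1, h2] at hcr <;>
      [left; (right; right); (right; left); left; (right; left); (right; right)] <;>
      linarith [hcr]
  refine ⟨g2, hker2, fun j hj => hsupp2T j (fun hjT => hj (hTS j hjT)), ?_, ?_⟩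
  · intro h
    rw [h] at hg2t₀
    simp at hg2t₀
  · intro j
    by_cases hjT : j ∈ T
    · by_cases hjt₀ : j = t₀
      · subst hjt₀; right; left; exact hg2t₀
      · obtain ⟨i, rfl⟩ := hesurj j (Finset.mem_erase.mpr ⟨hjt₀, hjT⟩)
        exact hxval i
    · left; exact hsupp2T j hjT

lemma exists_int_solution {m d : ℕ} (A : Matrix (Fin m) (Fin d) ℤ)
    (hA : A.IsTotallyUnimodular) (b : Fin m → ℤ) (l u : Fin d → ℤ) :
    ∀ N : ℕ, ∀ q : Fin d → ℚ,
    (Finset.univ.filter (fun j => ((⌊q j⌋ : ℚ) ≠ q j))).card = N →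
    (A.map ((↑) : ℤ → ℚ)) *ᵥ q = (fun i => (b i : ℚ)) →
    (∀ j, (l j : ℚ) ≤ q j) → (∀ j, q j ≤ (u j : ℚ)) →
    ∃ w : Fin d → ℤ, A *ᵥ w = b ∧ ∀ j, l j ≤ w j ∧ w j ≤ u j := by
  intro N
  induction N using Nat.strong_induction_on with
  | _ N ih =>
  intro q hcard hker hl hu
  classical
  set Aq := A.map ((↑) : ℤ → ℚ) with hAqdef
  set S := Finset.univ.filter (fun j => ((⌊q j⌋ : ℚ) ≠ q j)) with hSdef
  by_cases hSemp : S = ∅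
  · -- all integral: take floors
    have hqint : ∀ j, ((⌊q j⌋ : ℤ) : ℚ) = q j := by
      intro j
      by_contra h
      have hjS : j ∈ S := Finset.mem_filter.mpr ⟨Finset.mem_univ _, h⟩
      rw [hSemp] at hjS
      exact absurd hjS (Finset.notMem_empty j)
    refine ⟨fun j => ⌊q j⌋, ?_, ?_⟩
    · funext i
      have h0 : (fun j => ((⌊q j⌋ : ℤ) : ℚ)) = q := funext hqint
      have h2 : (Aq *ᵥ (fun j => ((⌊q j⌋ : ℤ) : ℚ))) i = ((A *ᵥ (fun j => ⌊q j⌋)) i : ℚ) := by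
        simp only [hAqdef, Matrix.mulVec, dotProduct, Matrix.map_apply]
        push_cast
        rfl
      rw [h0, hker] at h2
      have h4 : ((b i : ℤ) : ℚ) = ((A *ᵥ (fun j => ⌊q j⌋)) i : ℚ) := h2
      exact_mod_cast h4.symm
    · intro j
      constructor
      · have := hl j
        rw [← hqint j] at this
        exact_mod_cast this
      · have := hu j
        rw [← hqint j] at this
        exact_mod_cast this
  · have hSne : S.Nonempty := Finset.nonempty_iff_ne_empty.mpr hSemp
    by_cases hexg : ∃ g : Fin d → ℚ, Aq *ᵥ g = 0 ∧ (∀ j ∉ S, g j = 0) ∧ g ≠ 0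
    · -- move along a sign kernel vector
      obtain ⟨g0, hg0k, hg0s, hg0n⟩ := hexg
      obtain ⟨g, hgk, hgs, hgn, hgsign⟩ := exists_sign_kernel A hA S g0 hg0k hg0s hg0n
      set Tg := Finset.univ.filter (fun j => g j ≠ 0) with hTgdef
      have hTgne : Tg.Nonempty := by
        obtain ⟨j, hj⟩ := Function.ne_iff.mp hgn
        exact ⟨j, Finset.mem_filter.mpr ⟨Finset.mem_univ _, by simpa using hj⟩⟩
      have hTgS : ∀ j ∈ Tg, j ∈ S := by
        intro j hj
        by_contra h
        exact (Finset.mem_filter.mp hj).2 (hgs j h)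
      set F : Fin d → ℚ := fun j => if g j = 1 then (⌈q j⌉ : ℚ) - q j else q j - ⌊q j⌋ with hF
      set eps : ℚ := Tg.inf' hTgne F with heps
      have heps_le : ∀ j ∈ Tg, eps ≤ F j := fun j hj => Finset.inf'_le _ hj
      have heps0 : 0 ≤ eps := by
        rw [heps]
        apply Finset.le_inf'
        intro j hj
        rw [hF]
        dsimp only
        split
        · linarith [Int.le_ceil (q j)]
        · linarith [Int.floor_le (q j)]
      set q' : Fin d → ℚ := fun j => q j + eps * g j with hq'
      have hkerq' : Aq *ᵥ q' = (fun i => (b i : ℚ)) := by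
        have : q' = q + eps • g := by funext j; simp [hq', mul_comm]
        rw [this, Matrix.mulVec_add, Matrix.mulVec_smul, hker, hgk, smul_zero, add_zero]
      have hfix : ∀ j, g j = 0 → q' j = q j := by
        intro j h
        simp [hq', h]
      have hl' : ∀ j, (l j : ℚ) ≤ q' j := by
        intro j
        rcases hgsign j with h | h | h
        · rw [hfix j h]; exact hl j
        · have : q' j = q j + eps := by simp [hq', h]
          rw [this]; linarith [hl j]
        · have hjTg : j ∈ Tg := Finset.mem_filter.mpr ⟨Finset.mem_univ _, by rw [h]; norm_num⟩
          have hle := heps_le j hjTg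
          simp only [hF] at hle
          have hne1 : ¬ (g j = 1) := by rw [h]; norm_num
          rw [if_neg hne1] at hle
          have : q' j = q j - eps := by rw [hq']; dsimp only; rw [h]; ring
          rw [this]
          have hfl : (l j : ℚ) ≤ (⌊q j⌋ : ℚ) := by
            exact_mod_cast Int.le_floor.mpr (by exact_mod_cast hl j)
          linarith
      have hu' : ∀ j, q' j ≤ (u j : ℚ) := by
        intro j
        rcases hgsign j with h | h | h
        · rw [hfix j h]; exact hu j
        · have hjTg : j ∈ Tg := Finset.mem_filter.mpr ⟨Finset.mem_univ _, by rw [h]; norm_num⟩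
          have hle := heps_le j hjTg
          simp only [hF] at hle
          rw [if_pos h] at hle
          have : q' j = q j + eps := by simp [hq', h]
          rw [this]
          have hcl : (⌈q j⌉ : ℚ) ≤ (u j : ℚ) := by
            exact_mod_cast Int.ceil_le.mpr (by exact_mod_cast hu j)
          linarith
        · have : q' j = q j - eps := by rw [hq']; dsimp only; rw [h]; ring
          rw [this]; linarith [hu j]
      -- strict decrease of the fractional set
      obtain ⟨j₀, hj₀Tg, hj₀⟩ := Finset.exists_mem_eq_inf' hTgne F
      have hj₀int : ((⌊q' j₀⌋ : ℤ) : ℚ) = q' j₀ := by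
        rcases hgsign j₀ with h | h | h
        · exact absurd h (Finset.mem_filter.mp hj₀Tg).2
        · have heq : eps = (⌈q j₀⌉ : ℚ) - q j₀ := by
            rw [heps, hj₀]
            simp only [hF]
            rw [if_pos h]
          have : q' j₀ = (⌈q j₀⌉ : ℚ) := by
            rw [hq']; dsimp only; rw [h, heq]; ring
          rw [this, Int.floor_intCast]
        · have hne1 : ¬ (g j₀ = 1) := by rw [h]; norm_num
          have heq : eps = q j₀ - (⌊q j₀⌋ : ℚ) := by
            rw [heps, hj₀]
            simp only [hF]
            rw [if_neg hne1]
          have : q' j₀ = (⌊q j₀⌋ : ℚ) := by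
            rw [hq']; dsimp only; rw [h, heq]; ring
          rw [this, Int.floor_intCast]
      set S' := Finset.univ.filter (fun j => ((⌊q' j⌋ : ℚ) ≠ q' j)) with hS'def
      have hsub : S' ⊆ S := by
        intro j hj
        by_contra h
        have hq'j : q' j = q j := hfix j (hgs j h)
        have : ((⌊q j⌋ : ℚ)) = q j := by
          by_contra h2
          exact h (Finset.mem_filter.mpr ⟨Finset.mem_univ _, h2⟩)
        exact (Finset.mem_filter.mp hj).2 (by rw [hq'j]; exact this)
      have hj₀S : j₀ ∈ S := hTgS j₀ hj₀Tg
      have hj₀S' : j₀ ∉ S' := by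
        intro h
        exact (Finset.mem_filter.mp h).2 hj₀int
      have hlt : S'.card < N := by
        rw [← hcard]
        exact Finset.card_lt_card ⟨hsub, fun h => hj₀S' (h hj₀S)⟩
      exact ih S'.card hlt q' rfl hkerq' hl' hu'
    · -- independent columns on the fractional support: contradiction
      exfalso
      set kS : ℕ := S.card with hkS
      set e : Fin kS → Fin d := fun i => (S.equivFin.symm i : Fin d) with he
      have hmem : ∀ i, e i ∈ S := fun i => (S.equivFin.symm i).2
      have hinj : Function.Injective e := by
        intro a b h
        exact S.equivFin.symm.injective (Subtype.ext h)
      have hcardS : S.card = kS := rfl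
      set B : Matrix (Fin m) (Fin kS) ℚ := Aq.submatrix id e with hB
      have hBker : ∀ x : Fin kS → ℚ, B *ᵥ x = 0 → x = 0 := by
        intro x hx
        set gg : Fin d → ℚ := fun j => if h : j ∈ S then x (S.equivFin ⟨j, h⟩) else 0 with hgg
        have hggsupp : ∀ j ∉ S, gg j = 0 := fun j hj => dif_neg hj
        have hggval : ∀ i, gg (e i) = x i := by
          intro i
          have h1 : e i ∈ S := hmem i
          simp only [hgg, dif_pos h1]
          congr 1
          have h2 : (⟨e i, h1⟩ : {y // y ∈ S}) = S.equivFin.symm i := Subtype.ext rfl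
          rw [h2, Equiv.apply_symm_apply]
        have hggker : Aq *ᵥ gg = 0 := by
          funext i
          rw [mulVec_eq_sum_support Aq S gg hggsupp i]
          rw [← sum_fin_eq_sum_finset S e hmem hinj hcardS (fun j => Aq i j * gg j)]
          have hxi := congrFun hx i
          simp only [Matrix.mulVec, dotProduct, hB, Matrix.submatrix_apply, id] at hxi
          rw [← hxi]
          refine Finset.sum_congr rfl fun i' _ => ?_
          rw [hggval i']
        by_cases hggne : gg = 0
        · funext i
          have := congrFun hggne (e i)
          rw [hggval i] at this
          exact this
        · exact absurd ⟨gg, hggker, hggsupp, hggne⟩ hexg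
      obtain ⟨r, hr⟩ := exists_rows_det_ne_zero kS B hBker
      set C : Matrix (Fin kS) (Fin kS) ℚ := B.submatrix r id with hC
      have hCsub : C = Aq.submatrix r e := rfl
      set x : Fin kS → ℚ := fun i => q (e i) with hx
      set tz : Fin kS → ℤ := fun i' => b (r i') - ∑ j ∈ Sᶜ, A (r i') j * ⌊q j⌋ with htz
      have hqint : ∀ j ∉ S, ((⌊q j⌋ : ℤ) : ℚ) = q j := by
        intro j hj
        by_contra h
        exact hj (Finset.mem_filter.mpr ⟨Finset.mem_univ _, h⟩)
      have hCx : C *ᵥ x = fun i' => ((tz i' : ℤ) : ℚ) := by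
        funext i'
        have hrow : (Aq *ᵥ q) (r i') = (b (r i') : ℚ) := by rw [hker]
        simp only [Matrix.mulVec, dotProduct] at hrow
        have hsplit : ∑ j ∈ S, Aq (r i') j * q j + ∑ j ∈ Sᶜ, Aq (r i') j * q j
            = (b (r i') : ℚ) := by
          rw [Finset.sum_add_sum_compl]; exact hrow
        have hS_sum : ∑ j ∈ S, Aq (r i') j * q j = (C *ᵥ x) i' := by
          rw [← sum_fin_eq_sum_finset S e hmem hinj hcardS (fun j => Aq (r i') j * q j)]
          simp only [Matrix.mulVec, dotProduct, hCsub, Matrix.submatrix_apply, hx]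
        have hcompl : ∑ j ∈ Sᶜ, Aq (r i') j * q j
            = ((∑ j ∈ Sᶜ, A (r i') j * ⌊q j⌋ : ℤ) : ℚ) := by
          push_cast
          refine Finset.sum_congr rfl fun j hj => ?_
          rw [← hqint j (by simpa using hj)]
          simp [hAqdef, Matrix.map_apply]
        rw [hS_sum, hcompl] at hsplit
        rw [htz]
        push_cast at hsplit ⊢
        linarith [hsplit]
      have hdetC : C.det = 1 ∨ C.det = -1 := by
        rcases (hCsub ▸ tu_det_cases hA r e) with h | h | h
        · exact absurd h hr
        · exact Or.inl h
        · exact Or.inr h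
      -- q (e i) is integral for any i, contradiction
      have hkpos : 0 < kS := Finset.card_pos.mpr hSne
      set i : Fin kS := ⟨0, hkpos⟩ with hi
      have hcr := cramer_solution C hr x _ hCx i
      set Mz : Matrix (Fin kS) (Fin kS) ℤ :=
        fun a bcol => if bcol = i then tz a else A (r a) (e bcol) with hMz
      have hupd : C.updateCol i (fun i' => ((tz i' : ℤ) : ℚ)) = Mz.map ((↑) : ℤ → ℚ) := by
        ext a bcol
        rw [Matrix.updateCol_apply]
        by_cases hbi : bcol = i
        · rw [Matrix.map_apply]; simp [hbi, hMz]
        · rw [Matrix.map_apply]; simp [hbi, hMz, hCsub, hAqdef]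
      rw [hupd, ratCast_det] at hcr
      have hxint : ∃ z : ℤ, x i = (z : ℚ) := by
        rcases hdetC with h1 | h1
        · exact ⟨Mz.det, by rw [h1] at hcr; linarith [hcr]⟩
        · exact ⟨-Mz.det, by rw [h1] at hcr; rw [Int.cast_neg]; linarith [hcr]⟩
      obtain ⟨z, hz⟩ := hxint
      have heiS : e i ∈ S := hmem i
      have : ((⌊q (e i)⌋ : ℤ) : ℚ) = q (e i) := by
        have : q (e i) = (z : ℚ) := hz
        rw [this, Int.floor_intCast]
      exact (Finset.mem_filter.mp heiS).2 this

lemma exists_decomposition {m d : ℕ} (A : Matrix (Fin m) (Fin d) ℤ)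
    (hA : A.IsTotallyUnimodular) (b : Fin m → ℤ) :
    ∀ N : ℕ, ∀ z : Fin d → ℤ,
    (∀ j, 0 ≤ z j ∧ z j ≤ N) → A *ᵥ z = (N : ℤ) • b →
    ∃ x : Fin N → Fin d → ℤ, (∀ k j, x k j = 0 ∨ x k j = 1) ∧
      (∀ k, A *ᵥ (x k) = b) ∧ (∀ j, ∑ k, x k j = z j) := by
  intro N
  induction N with
  | zero =>
    intro z hz _
    refine ⟨Fin.elim0, fun k => k.elim0, fun k => k.elim0, fun j => ?_⟩
    have := hz j
    simp only [Nat.cast_zero] at this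
    simp
    omega
  | succ N ihN =>
    intro z hz hAz
    have hpos : (0 : ℚ) < (N : ℚ) + 1 := by positivity
    set q : Fin d → ℚ := fun j => (z j : ℚ) / ((N : ℚ) + 1) with hq
    set l : Fin d → ℤ := fun j => max 0 (z j - N) with hldef
    set u : Fin d → ℤ := fun j => min 1 (z j) with hudef
    have hkerq : (A.map ((↑) : ℤ → ℚ)) *ᵥ q = (fun i => (b i : ℚ)) := by
      funext i
      have h0 : ∑ x : Fin d, ((A i x : ℚ)) * (z x : ℚ) = ((N : ℚ) + 1) * (b i : ℚ) := by
        have h2 := congrFun hAz i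
        simp only [Matrix.mulVec, dotProduct, Pi.smul_apply, smul_eq_mul] at h2
        push_cast
        exact_mod_cast h2
      simp only [Matrix.mulVec, dotProduct, Matrix.map_apply, hq]
      have h1 : ∑ x : Fin d, ((A i x : ℚ)) * ((z x : ℚ) / ((N : ℚ) + 1))
          = (∑ x : Fin d, (A i x : ℚ) * (z x : ℚ)) / ((N : ℚ) + 1) := by
        rw [Finset.sum_div]
        refine Finset.sum_congr rfl fun x _ => ?_
        ring
      rw [h1, h0, mul_comm, mul_div_assoc, div_self (ne_of_gt hpos), mul_one]
    have hlq : ∀ j, (l j : ℚ) ≤ q j := by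
      intro j
      have h1 : (0 : ℚ) ≤ (z j : ℚ) := by exact_mod_cast (hz j).1
      have h2 : (z j : ℚ) ≤ (N : ℚ) + 1 := by
        have := (hz j).2
        push_cast at this ⊢
        exact_mod_cast this
      have hcast : ((l j : ℤ) : ℚ) = max 0 ((z j : ℚ) - N) := by
        rw [hldef]
        push_cast
        rfl
      rw [hcast, max_le_iff]
      constructor
      · exact div_nonneg h1 hpos.le
      · rw [le_div_iff₀ hpos]
        nlinarith
    have huq : ∀ j, q j ≤ (u j : ℚ) := by
      intro j
      have h1 : (0 : ℚ) ≤ (z j : ℚ) := by exact_mod_cast (hz j).1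
      have h2 : (z j : ℚ) ≤ (N : ℚ) + 1 := by
        have := (hz j).2
        push_cast at this ⊢
        exact_mod_cast this
      have hcast : ((u j : ℤ) : ℚ) = min 1 ((z j : ℚ)) := by
        rw [hudef]
        push_cast
        rfl
      rw [hcast, le_min_iff]
      constructor
      · rw [div_le_one hpos]
        exact h2
      · exact div_le_self h1 (by linarith)
    obtain ⟨w, hwker, hwbd⟩ := exists_int_solution A hA b l u _ q rfl hkerq hlq huq
    have hw01 : ∀ j, w j = 0 ∨ w j = 1 := by
      intro j
      have h1 := (hwbd j).1
      have h2 := (hwbd j).2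
      rw [hldef] at h1
      rw [hudef] at h2
      simp only [le_min_iff, max_le_iff] at h1 h2
      omega
    set z' : Fin d → ℤ := fun j => z j - w j with hz'
    have hz'bd : ∀ j, 0 ≤ z' j ∧ z' j ≤ N := by
      intro j
      have h1 := (hwbd j).1
      have h2 := (hwbd j).2
      rw [hldef] at h1
      rw [hudef] at h2
      simp only [le_min_iff, max_le_iff, le_max_iff, min_le_iff] at h1 h2
      constructor <;> [skip; skip] <;> simp only [hz'] <;> omega
    have hAz' : A *ᵥ z' = (N : ℤ) • b := by
      have hsub : z' = z - w := by funext j; simp [hz']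
      rw [hsub, Matrix.mulVec_sub, hAz, hwker]
      funext i
      push_cast
      simp only [Pi.sub_apply, Pi.smul_apply, smul_eq_mul]
      push_cast
      ring
    obtain ⟨x', hx'01, hx'ker, hx'sum⟩ := ihN z' hz'bd hAz'
    refine ⟨Fin.cons w x', ?_, ?_, ?_⟩
    · intro k j
      refine Fin.cases ?_ ?_ k
      · simpa using hw01 j
      · intro k'
        simpa using hx'01 k' j
    · intro k
      refine Fin.cases ?_ ?_ k
      · simpa using hwker
      · intro k'
        simpa using hx'ker k'
    · intro j
      rw [Fin.sum_univ_succ]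
      simp only [Fin.cons_zero, Fin.cons_succ]
      rw [hx'sum j]
      simp [hz']

/-- If the feasible set `F = {x ∈ {0,1}^{dn} : Axᵏ = b ∀k}` is nonempty, then the minimum
of `c x̄` over `F` equals the minimum of `cy` over the relaxation
`{y ∈ {0,1}^{dn} : A ∑ₖ yᵏ = n·b}`. -/
theorem min_compression_eq_min_relaxation (m d n : ℕ) (hn : 0 < n)
    (A : Matrix (Fin m) (Fin d) ℤ) (hA : A.IsTotallyUnimodular)
    (b : Fin m → ℤ) (c : Fin n → Fin d → ℤ)
    (hc : ∀ (k : ℕ) (h : k + 1 < n) (i : Fin d),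
      c ⟨k, Nat.lt_of_succ_lt h⟩ i ≤ c ⟨k + 1, h⟩ i)
    (hF : ∃ x : Fin n → Fin d → ℤ,
      (∀ k j, x k j = 0 ∨ x k j = 1) ∧ ∀ k, A.mulVec (x k) = b) :
    ∃ v : ℤ,
      IsLeast {v' : ℤ | ∃ x : Fin n → Fin d → ℤ,
        (∀ k j, x k j = 0 ∨ x k j = 1) ∧ (∀ k, A.mulVec (x k) = b) ∧
        v' = pairing n d c (compression n d x)} v ∧
      IsLeast {v' : ℤ | ∃ y : Fin n → Fin d → ℤ,
        (∀ k j, y k j = 0 ∨ y k j = 1) ∧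
        A.mulVec (fun j => ∑ k, y k j) = (n : ℤ) • b ∧
        v' = pairing n d c y} v := by
  classical
  set Left : Set ℤ := {v' : ℤ | ∃ x : Fin n → Fin d → ℤ,
    (∀ k j, x k j = 0 ∨ x k j = 1) ∧ (∀ k, A.mulVec (x k) = b) ∧
    v' = pairing n d c (compression n d x)} with hLeft
  set Right : Set ℤ := {v' : ℤ | ∃ y : Fin n → Fin d → ℤ,
    (∀ k j, y k j = 0 ∨ y k j = 1) ∧
    A.mulVec (fun j => ∑ k, y k j) = (n : ℤ) • b ∧
    v' = pairing n d c y} with hRight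
  -- Left ⊆ Right
  have hLR : Left ⊆ Right := by
    rintro v ⟨x, hx01, hxfeas, rfl⟩
    refine ⟨compression n d x, ?_, ?_, rfl⟩
    · intro k j
      unfold compression
      split <;> simp
    · have hcol : (fun j => ∑ k, compression n d x k j) = (fun j => ∑ k, x k j) := by
        funext j
        exact sum_compression n d x hx01 j
      rw [hcol]
      funext i
      simp only [Matrix.mulVec, dotProduct, Finset.mul_sum]
      rw [Finset.sum_comm]
      have : ∀ k : Fin n, ∑ j, A i j * x k j = b i := by
        intro k
        have := congrFun (hxfeas k) i
        simpa [Matrix.mulVec, dotProduct] using this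
      rw [Finset.sum_congr rfl (fun k _ => this k)]
      simp [mul_comm]
  -- For every element of Right there is a smaller element of Left
  have hRL : ∀ v' ∈ Right, ∃ v'' ∈ Left, v'' ≤ v' := by
    rintro v' ⟨y, hy01, hyfeas, rfl⟩
    set z : Fin d → ℤ := fun j => ∑ k, y k j with hz
    have hzbd : ∀ j, 0 ≤ z j ∧ z j ≤ n :=
      fun j => sum_le_card_of_le_one (fun k => y k j) (fun k => hy01 k j)
    obtain ⟨x, hx01, hxfeas, hxsum⟩ := exists_decomposition A hA b n z hzbd hyfeas
    have hcomp : compression n d x = compression n d y := by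
      funext k i
      unfold compression
      rw [hxsum i]
    refine ⟨pairing n d c (compression n d x), ⟨x, hx01, hxfeas, rfl⟩, ?_⟩
    rw [hcomp]
    exact pairing_compression_le n d c y hc hy01
  -- Left is finite and nonempty, take its least element
  have hfinbox : Set.Finite {x : Fin n → Fin d → ℤ | ∀ k j, x k j = 0 ∨ x k j = 1} := by
    have h1 : Set.Finite (Set.pi Set.univ
        (fun _ : Fin n => Set.pi Set.univ (fun _ : Fin d => ({0, 1} : Set ℤ)))) :=
      Set.Finite.pi (fun _ => Set.Finite.pi (fun _ => (Set.finite_singleton 1).insert 0))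
    apply h1.subset
    intro x hx k _ j _
    rcases hx k j with h | h <;> simp [h]
  have hfinL : Left.Finite := by
    have : Left ⊆ (fun x => pairing n d c (compression n d x)) ''
        {x : Fin n → Fin d → ℤ | ∀ k j, x k j = 0 ∨ x k j = 1} := by
      rintro v ⟨x, hx01, _, rfl⟩
      exact ⟨x, hx01, rfl⟩
    exact (hfinbox.image _).subset this
  have hneL : Left.Nonempty := by
    obtain ⟨x, hx01, hxfeas⟩ := hF
    exact ⟨pairing n d c (compression n d x), x, hx01, hxfeas, rfl⟩
  obtain ⟨v, hvL, hvmin⟩ := Set.exists_min_image Left id hfinL hneL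
  refine ⟨v, ⟨hvL, fun v' hv' => hvmin v' hv'⟩, ⟨hLR hvL, fun v' hv' => ?_⟩⟩
  obtain ⟨v'', hv''L, hle⟩ := hRL v' hv'
  exact (hvmin v'' hv''L).trans hle
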